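/- For every d ≥ 3 and s, t, u > 0, there exist d+1 points p_1, …, p_{d+1} in some Euclidean space with squared distances ‖p_1 − p_2‖² = ‖p_1 − p_j‖² = s + t + u for 4 ≤ j ≤ d+1, ‖p_1 − p_3‖² = s + u, and ‖p_i − p_j‖² = s + t for 2 ≤ i < j ≤ d+1, and these points are affinely independent (form a d-simplex). -/

import Mathlib

set_option maxHeartbeats 1000000

theorem stmt6 (d : ℕ) (hd : 3 ≤ d) (s t u : ℝ) (hs : 0 < s) (ht : 0 < t) (hu : 0 < u) :
    ∃ (N : ℕ) (p : Fin (d + 1) → EuclideanSpace ℝ (Fin N)),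
      AffineIndependent ℝ p ∧
      dist (p 0) (p 1) ^ 2 = s + t + u ∧
      (∀ j : Fin (d + 1), 3 ≤ (j : ℕ) → dist (p 0) (p j) ^ 2 = s + t + u) ∧
      dist (p 0) (p 2) ^ 2 = s + u ∧
      (∀ i j : Fin (d + 1), 1 ≤ (i : ℕ) → i < j → dist (p i) (p j) ^ 2 = s + t) := by
  -- Fin literal values
  have v0 : ((0 : Fin (d+1)) : ℕ) = 0 := rfl
  have v1 : ((1 : Fin (d+1)) : ℕ) = 1 := by
    have h : ((1 : Fin (d+1)) : ℕ) = 1 % (d+1) := rfl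
    rw [h, Nat.mod_eq_of_lt (by omega)]
  have v2 : ((2 : Fin (d+1)) : ℕ) = 2 := by
    have h : ((2 : Fin (d+1)) : ℕ) = 2 % (d+1) := rfl
    rw [h, Nat.mod_eq_of_lt (by omega)]
  -- the scalars
  have hst : 0 < s + t := by linarith
  set c := Real.sqrt ((s+t)/2) with hcdef
  have hc2 : c^2 = (s+t)/2 := Real.sq_sqrt (by linarith)
  have hcpos : 0 < c := Real.sqrt_pos.mpr (by linarith)
  set x := t / (2*c) with hxdef
  have hyarg : 0 < s + u - s^2/(2*(s+t)) := by
    have h : s^2/(2*(s+t)) < s := by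
      rw [div_lt_iff₀ (by linarith)]; nlinarith
    linarith
  set y := Real.sqrt (s + u - s^2/(2*(s+t))) with hydef
  have hy2 : y^2 = s + u - s^2/(2*(s+t)) := Real.sq_sqrt hyarg.le
  have hypos : 0 < y := Real.sqrt_pos.mpr hyarg
  have hxc : 2 * (x * c) = t := by
    rw [hxdef]; field_simp
  have hx2 : x^2 = t^2/(2*(s+t)) := by
    rw [hxdef, div_pow]
    have h4 : (2*c)^2 = 2*(s+t) := by rw [mul_pow, hc2]; ring
    rw [h4]
  have e1 : x^2 + y^2 + c^2 = s + t + u := by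
    rw [hx2, hy2, hc2]; field_simp; ring
  -- the points
  set P : Fin (d+1) → EuclideanSpace ℝ (Fin (d+1)) := fun i =>
    if (i : ℕ) = 0 then
      x • EuclideanSpace.single (2 : Fin (d+1)) (1:ℝ)
        + y • EuclideanSpace.single (0 : Fin (d+1)) (1:ℝ)
    else c • EuclideanSpace.single i (1:ℝ) with hPdef
  have hP0 : P 0 = x • EuclideanSpace.single (2 : Fin (d+1)) (1:ℝ)
      + y • EuclideanSpace.single (0 : Fin (d+1)) (1:ℝ) := by
    rw [hPdef]; simp
  have hPi : ∀ i : Fin (d+1), (i : ℕ) ≠ 0 → P i = c • EuclideanSpace.single i (1:ℝ) := by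
    intro i hi; rw [hPdef]; simp [hi]
  have dsq : ∀ v w : EuclideanSpace ℝ (Fin (d+1)),
      dist v w ^ 2 = (inner ℝ v v : ℝ) - 2 * inner ℝ v w + inner ℝ w w := by
    intro v w
    rw [dist_eq_norm, norm_sub_sq_real, real_inner_self_eq_norm_sq, real_inner_self_eq_norm_sq]
  refine ⟨d+1, P, ?_, ?_, ?_, ?_, ?_⟩
  · -- AffineIndependent
    have n01 : (0 : Fin (d+1)) ≠ 1 := Fin.ne_of_val_ne (by rw [v0, v1]; omega)
    have n02 : (0 : Fin (d+1)) ≠ 2 := Fin.ne_of_val_ne (by rw [v0, v2]; omega)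
    have hP1 : P 1 = c • EuclideanSpace.single (1 : Fin (d+1)) (1:ℝ) :=
      hPi 1 (by rw [v1]; omega)
    have hP1k : ∀ k : Fin (d+1), k ≠ 1 → (P 1) k = 0 := by
      intro k hk
      rw [hP1]
      simp [EuclideanSpace.single_apply, hk]
    rw [affineIndependent_iff_linearIndependent_vsub ℝ P 1, Fintype.linearIndependent_iff]
    intro g hg
    set z0 : {z : Fin (d+1) // z ≠ 1} := ⟨0, n01⟩ with hz0def
    have hg' : ∀ k : Fin (d+1),
        (∑ i : {z : Fin (d+1) // z ≠ 1}, g i * ((P i) k - (P 1) k)) = 0 := by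
      intro k
      have h : EuclideanSpace.proj k
          (∑ i : {z : Fin (d+1) // z ≠ 1}, g i • (P i -ᵥ P 1)) = 0 := by
        rw [hg]; simp
      rw [map_sum] at h
      simpa [smul_eq_mul, vsub_eq_sub] using h
    have key0 : g z0 = 0 := by
      have hterm : ∀ b : {z : Fin (d+1) // z ≠ 1}, b ≠ z0 →
          g b * ((P b) 0 - (P 1) 0) = 0 := by
        intro b hb
        have hb0 : ((b : Fin (d+1)) : ℕ) ≠ 0 := by
          intro hh
          exact hb (Subtype.ext (Fin.ext (by rw [hh]; rfl)))
        rw [hPi b hb0, hP1k 0 n01]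
        have hne : (0 : Fin (d+1)) ≠ (b : Fin (d+1)) :=
          Fin.ne_of_val_ne (by rw [v0]; omega)
        simp [EuclideanSpace.single_apply, hne]
      have h := hg' 0
      rw [Finset.sum_eq_single z0 (fun b _ hb => hterm b hb)
        (fun hb => absurd (Finset.mem_univ z0) hb)] at h
      have hval : (P ((z0 : {z : Fin (d+1) // z ≠ 1}) : Fin (d+1))) 0 - (P 1) 0 = y := by
        show (P 0) 0 - (P 1) 0 = y
        rw [hP0, hP1k 0 n01]
        simp [EuclideanSpace.single_apply, n02]
      rw [hval] at h
      rcases mul_eq_zero.mp h with h' | h'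
      · exact h'
      · exact absurd h' hypos.ne'
    intro i
    by_cases hi0 : (i : {z : Fin (d+1) // z ≠ 1}) = z0
    · rw [hi0]; exact key0
    · have hiv : ((i : Fin (d+1)) : ℕ) ≠ 0 := by
        intro hh
        exact hi0 (Subtype.ext (Fin.ext (by rw [hh]; rfl)))
      have hterm : ∀ b : {z : Fin (d+1) // z ≠ 1}, b ≠ i →
          g b * ((P b) (i : Fin (d+1)) - (P 1) (i : Fin (d+1))) = 0 := by
        intro b hb
        by_cases hbz : b = z0
        · rw [hbz, key0, zero_mul]
        · have hb0 : ((b : Fin (d+1)) : ℕ) ≠ 0 := by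
            intro hh
            exact hbz (Subtype.ext (Fin.ext (by rw [hh]; rfl)))
          have hne : ((i : Fin (d+1)) : Fin (d+1)) ≠ (b : Fin (d+1)) := by
            intro hh
            exact hb (Subtype.ext hh.symm)
          rw [hPi b hb0, hP1k _ i.2]
          simp [EuclideanSpace.single_apply, hne]
      have h := hg' (i : Fin (d+1))
      rw [Finset.sum_eq_single i (fun b _ hb => hterm b hb)
        (fun hb => absurd (Finset.mem_univ i) hb)] at h
      have hval : (P (i : Fin (d+1))) (i : Fin (d+1)) - (P 1) (i : Fin (d+1)) = c := by
        rw [hPi _ hiv, hP1k _ i.2]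
        simp [EuclideanSpace.single_apply]
      rw [hval] at h
      rcases mul_eq_zero.mp h with h' | h'
      · exact h'
      · exact absurd h' hcpos.ne'
  · -- dist (P 0) (P 1) ^ 2 = s + t + u
    rw [dsq, hP0, hPi 1 (by rw [v1]; omega)]
    have n21 : (2 : Fin (d+1)) ≠ 1 := Fin.ne_of_val_ne (by rw [v1, v2]; omega)
    have n01 : (0 : Fin (d+1)) ≠ 1 := Fin.ne_of_val_ne (by rw [v1, v0]; omega)
    have n20 : (2 : Fin (d+1)) ≠ 0 := Fin.ne_of_val_ne (by rw [v0, v2]; omega)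
    have n02 : (0 : Fin (d+1)) ≠ 2 := Fin.ne_of_val_ne (by rw [v0, v2]; omega)
    simp only [inner_add_left, inner_add_right, real_inner_smul_left, real_inner_smul_right,
      EuclideanSpace.inner_single_left, EuclideanSpace.single_apply, starRingEnd_apply]
    simp [n21, n01, n20, n02]
    nlinarith [e1]
  · -- ∀ j, 3 ≤ j → ...
    intro j hj
    have hj0 : j ≠ 0 := Fin.ne_of_val_ne (by omega)
    have hj2 : j ≠ 2 := Fin.ne_of_val_ne (by rw [v2]; omega)
    have n2j : (2 : Fin (d+1)) ≠ j := hj2.symm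
    have n0j : (0 : Fin (d+1)) ≠ j := hj0.symm
    have n20 : (2 : Fin (d+1)) ≠ 0 := Fin.ne_of_val_ne (by rw [v0, v2]; omega)
    have n02 : (0 : Fin (d+1)) ≠ 2 := Fin.ne_of_val_ne (by rw [v0, v2]; omega)
    rw [dsq, hP0, hPi j (by omega)]
    simp only [inner_add_left, inner_add_right, real_inner_smul_left, real_inner_smul_right,
      EuclideanSpace.inner_single_left, EuclideanSpace.single_apply, starRingEnd_apply]
    simp [n2j, n0j, n20, n02]
    nlinarith [e1]
  · -- dist (P 0) (P 2) ^ 2 = s + u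
    rw [dsq, hP0, hPi 2 (by rw [v2]; omega)]
    have n20 : (2 : Fin (d+1)) ≠ 0 := Fin.ne_of_val_ne (by rw [v0, v2]; omega)
    have n02 : (0 : Fin (d+1)) ≠ 2 := Fin.ne_of_val_ne (by rw [v0, v2]; omega)
    simp only [inner_add_left, inner_add_right, real_inner_smul_left, real_inner_smul_right,
      EuclideanSpace.inner_single_left, EuclideanSpace.single_apply, starRingEnd_apply]
    simp [n20, n02]
    nlinarith [e1, hxc]
  · -- pairwise s + t
    intro i j hi hij
    have hj : 1 ≤ (j : ℕ) := by omega
    have hne : i ≠ j := ne_of_lt hij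
    rw [dsq, hPi i (by omega), hPi j (by omega)]
    simp only [real_inner_smul_left, real_inner_smul_right,
      EuclideanSpace.inner_single_left, EuclideanSpace.single_apply, starRingEnd_apply]
    simp [hne, hne.symm]
    nlinarith [hc2]
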